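/- Creation and annihilation operators are partially adjoint with respect to ⟨·|·⟩: for words w0, w1 in {x,y} and valid indices i, ⟨a_{x,i} w0 | w1⟩ = ⟨w0 | a*_{x,i} w1⟩ and ⟨w0 | a_{y,i} w1⟩ = ⟨a*_{y,i} w0 | w1⟩, where a value of 0 (from a terminal annihilation failing) gives 0 in the form. -/

import Mathlib

open scoped Classical

/-- Words over the two-letter alphabet {x,y}; `false` is `x`, `true` is `y`. -/
abbrev Word := List Bool

/-- 0-indexed positions of the x's (`false`) in a word. -/
def xIdx (w : Word) : List ℕ :=
  (List.range w.length).filter (fun j => w.getD j true = false)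

/-- 0-indexed positions of the y's (`true`) in a word. -/
def yIdx (w : Word) : List ℕ :=
  (List.range w.length).filter (fun j => w.getD j false = true)

/-- `fX w i` = number of y's strictly left of the i-th x of `w` (i is 0-indexed). -/
def fX (w : Word) (i : ℕ) : ℕ := (xIdx w).getD i 0 - i

/-- `fY w j` = number of x's strictly left of the j-th y of `w` (j is 0-indexed). -/
def fY (w : Word) (j : ℕ) : ℕ := (yIdx w).getD j 0 - j

/-- `hX w i` = (1-indexed) position of the i-th x of `w` (i is 0-indexed). -/
def hX (w : Word) (i : ℕ) : ℕ := (xIdx w).getD i 0 + 1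

/-- The pawn-move partial order: same letter counts, and each x of `w0` lies at a
position at most that of the corresponding x of `w1`. -/
def wle (w0 w1 : Word) : Prop :=
  w0.count false = w1.count false ∧ w0.count true = w1.count true ∧
  ∀ i < w0.count false, (xIdx w0).getD i 0 ≤ (xIdx w1).getD i 0

/-- Creation operator `a*_{s,i}` on words: `i = 0` prepends `s`; `1 ≤ i ≤ n_s`
replaces the i-th `s` by `ss`; `i = n_s + 1` appends `s`. -/
def create (s : Bool) : ℕ → Word → Word
  | 0, w => s :: w
  | _+1, [] => [s]
  | i+1, a :: w =>
    if a = s then (if i = 0 then s :: s :: w else a :: create s i w)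
    else a :: create s (i+1) w

/-- Delete the i-th occurrence (1-indexed) of `s`. -/
def delNth (s : Bool) : ℕ → Word → Word
  | _, [] => []
  | i, a :: w => if a = s then (if i ≤ 1 then w else a :: delNth s (i-1) w)
                 else a :: delNth s i w

/-- Annihilation operator `a_{s,i}` on words: `i = 0` deletes an initial `s` (else 0);
`1 ≤ i ≤ n_s` deletes the i-th `s`; `i = n_s + 1` deletes a final `s` (else 0). -/
def annih (s : Bool) (i : ℕ) (w : Word) : Option Word :=
  if i = 0 then
    match w with
    | a :: t => if a = s then some t else none
    | [] => none
  else if i ≤ w.count s then some (delNth s i w)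
  else if i = w.count s + 1 then
    if w.getLast? = some s then some w.dropLast else none
  else none

/-- The free ℤ-module on words: the Fock space `F`. -/
abbrev FS := Word →₀ ℤ

/-- Basis vector of a word. -/
noncomputable def δ (w : Word) : FS := Finsupp.single w 1

/-- `0` for `none`, basis vector for `some`. -/
noncomputable def optδ (o : Option Word) : FS := o.elim 0 δ

/-- Extend a word-indexed family of vectors to a linear map on `FS`. -/
noncomputable def opOf (g : Word → FS) : FS →ₗ[ℤ] FS := Finsupp.lift FS ℤ Word g

/-- Creation operator as a linear map. -/
noncomputable def Cr (s : Bool) (i : ℕ) : FS →ₗ[ℤ] FS := opOf (fun w => δ (create s i w))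

/-- Annihilation operator as a linear map. -/
noncomputable def An (s : Bool) (i : ℕ) : FS →ₗ[ℤ] FS := opOf (fun w => optδ (annih s i w))

/-- Boolean bilinear form on words: `1` if `w0 ≤ w1` in the pawn-move order, else `0`. -/
noncomputable def pairW (w0 w1 : Word) : ℤ := if wle w0 w1 then 1 else 0

/-- Bilinear extension of `pairW` to the free module. -/
noncomputable def pairF (u v : FS) : ℤ :=
  u.sum fun w0 a => v.sum fun w1 b => a * b * pairW w0 w1

/-- Kronecker delta form on words. -/
noncomputable def dotW (w0 w1 : Word) : ℤ := if w0 = w1 then 1 else 0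

/-- Bilinear extension of `dotW`: words form an orthonormal basis. -/
noncomputable def dotF (u v : FS) : ℤ :=
  u.sum fun w0 a => v.sum fun w1 b => a * b * dotW w0 w1

/-- All words of a given length. -/
noncomputable def wordsOfLen (n : ℕ) : Finset Word :=
  (Finset.univ : Finset (Fin n → Bool)).image List.ofFn

/-- Swap `xy → yx` at the x's whose (0-indexed) number lies in `T`;
the counter `k` records how many x's have been passed. -/
def psiX (T : Finset ℕ) : Word → ℕ → Word
  | [], _ => []
  | false :: true :: w, k =>
      if k ∈ T then true :: false :: psiX T w (k+1)
      else false :: psiX T (true :: w) (k+1)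
  | false :: w, k => false :: psiX T w (k+1)
  | true :: w, k => true :: psiX T w k
  termination_by w _ => w.length
  decreasing_by all_goals (simp <;> omega)

/-- Swap `yx → xy` at the y's whose (0-indexed) number lies in `T`. -/
def psiY (T : Finset ℕ) : Word → ℕ → Word
  | [], _ => []
  | true :: false :: w, k =>
      if k ∈ T then false :: true :: psiY T w (k+1)
      else true :: psiY T (false :: w) (k+1)
  | true :: w, k => true :: psiY T w (k+1)
  | false :: w, k => false :: psiY T w k
  termination_by w _ => w.length
  decreasing_by all_goals (simp <;> omega)

/-- `Ex w`: 0-indexed numbers of the x's of `w` immediately followed by a y. -/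
noncomputable def Ex (w : Word) : Finset ℕ :=
  (Finset.range (w.count false)).filter
    (fun i => w.getD ((xIdx w).getD i 0 + 1) false = true)

/-- `Ey w`: 0-indexed numbers of the y's of `w` immediately followed by an x. -/
noncomputable def Ey (w : Word) : Finset ℕ :=
  (Finset.range (w.count true)).filter
    (fun i => w.getD ((yIdx w).getD i 0 + 1) true = false)

def occ (b : Bool) (w : Word) : List ℕ :=
  (List.range w.length).filter (fun j => w.getD j (!b) = b)

lemma occ_cons (b a : Bool) (w : Word) :
    occ b (a :: w) = (if a = b then [0] else []) ++ (occ b w).map (· + 1) := by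
  unfold occ
  rw [List.length_cons, List.range_succ_eq_map, List.filter_cons]
  simp only [List.getD_cons_zero]
  rw [List.filter_map]
  have : ((fun j => decide (((a :: w).getD j (!b)) = b)) ∘ Nat.succ)
      = (fun j => decide ((w.getD j (!b)) = b)) := by
    funext j; simp [List.getD_cons_succ]
  split <;> simp_all [this]

lemma getD_map_succ (l : List ℕ) (j : ℕ) (h : j < l.length) :
    (l.map (· + 1)).getD j 0 = l.getD j 0 + 1 := by
  rw [List.getD_eq_getElem _ _ (by simpa using h), List.getD_eq_getElem _ _ h, List.getElem_map]

lemma length_occ (b : Bool) (w : Word) : (occ b w).length = w.count b := by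
  induction w with
  | nil => rfl
  | cons a w ih =>
    rw [occ_cons, List.length_append, List.length_map, ih, List.count_cons]
    split <;> simp_all <;> omega

lemma occ_mem (b : Bool) (w : Word) (j : ℕ) (h : j < w.count b) :
    (occ b w).getD j 0 ∈ occ b w := by
  rw [List.getD_eq_getElem _ _ (by rw [length_occ]; exact h)]
  exact List.getElem_mem _

lemma occ_lt_length (b : Bool) (w : Word) (j : ℕ) (h : j < w.count b) :
    (occ b w).getD j 0 < w.length := by
  have := occ_mem b w j h
  unfold occ at this
  exact List.mem_range.mp (List.mem_of_mem_filter this)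

lemma occ_letter (b : Bool) (w : Word) (j : ℕ) (h : j < w.count b) :
    w.getD ((occ b w).getD j 0) (!b) = b := by
  have hm := occ_mem b w j h
  set p := (occ b w).getD j 0 with hp
  rw [occ] at hm
  simpa using List.of_mem_filter hm

lemma count_add_count (w : Word) : w.count false + w.count true = w.length := by
  induction w with
  | nil => rfl
  | cons a w ih => cases a <;> simp [List.count_cons] <;> omega

lemma occ_lt_iff (b : Bool) (w : Word) : ∀ j c, j < w.count b →
    ((occ b w).getD j 0 < c ↔ j < (w.take c).count b) := by
  induction w with
  | nil => intro j c h; simp at h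
  | cons a w ih =>
    intro j c h
    cases c with
    | zero => simp
    | succ c =>
      rw [List.take_succ_cons, occ_cons]
      by_cases hab : a = b
      · subst hab
        rw [if_pos rfl, List.singleton_append]
        cases j with
        | zero => simp [List.count_cons]
        | succ j =>
          have hj : j < w.count a := by simp [List.count_cons] at h; omega
          rw [List.getD_cons_succ, getD_map_succ _ _ (by rw [length_occ]; exact hj)]
          have := ih j c hj
          have h1 : List.count a (a :: List.take c w) = List.count a (List.take c w) + 1 := by
            simp [List.count_cons]
          omega
      · simp only [if_neg hab, List.nil_append]
        have hj : j < w.count b := by simpa [List.count_cons, hab] using h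
        rw [getD_map_succ _ _ (by rw [length_occ]; exact hj)]
        have := ih j c hj
        have h1 : List.count b (a :: List.take c w) = List.count b (List.take c w) := by
          simp [List.count_cons, hab]
        omega

lemma count_take_occ (b : Bool) (w : Word) : ∀ j, j < w.count b →
    (w.take ((occ b w).getD j 0)).count b = j := by
  induction w with
  | nil => intro j h; simp at h
  | cons a w ih =>
    intro j h
    rw [occ_cons]
    by_cases hab : a = b
    · subst hab
      rw [if_pos rfl, List.singleton_append]
      cases j with
      | zero => simp
      | succ j =>
        have hj : j < w.count a := by simp [List.count_cons] at h; omega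
        rw [List.getD_cons_succ, getD_map_succ _ _ (by rw [length_occ]; exact hj),
          List.take_succ_cons, List.count_cons, ih j hj]
        simp
    · simp only [if_neg hab, List.nil_append]
      have hj : j < w.count b := by simpa [List.count_cons, hab] using h
      rw [getD_map_succ _ _ (by rw [length_occ]; exact hj), List.take_succ_cons,
        List.count_cons, ih j hj]
      simp [hab]

lemma delNth_cons (s a : Bool) (i : ℕ) (w : Word) :
    delNth s i (a :: w) = if a = s then (if i ≤ 1 then w else a :: delNth s (i-1) w)
      else a :: delNth s i w := rfl

lemma create_cons (s a : Bool) (i : ℕ) (w : Word) :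
    create s (i+1) (a :: w) = if a = s then (if i = 0 then s :: s :: w else a :: create s i w)
      else a :: create s (i+1) w := rfl

lemma count_delNth_same (s : Bool) (w : Word) : ∀ i, 1 ≤ i → i ≤ w.count s →
    (delNth s i w).count s = w.count s - 1 := by
  induction w with
  | nil => intro i h1 h2; simp at h2; omega
  | cons a w ih =>
    intro i h1 h2
    rw [delNth_cons]
    by_cases has : a = s
    · subst has
      have hc : List.count a (a :: w) = w.count a + 1 := by simp [List.count_cons]
      by_cases hi : i ≤ 1
      · simp [hi, hc]
      · rw [if_pos rfl, if_neg hi]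
        have := ih (i-1) (by omega) (by omega)
        simp [List.count_cons, this]
        omega
    · rw [if_neg has]
      have hc : List.count s (a :: w) = w.count s := by simp [List.count_cons, Ne.symm has, has]
      have := ih i h1 (by omega)
      simp [List.count_cons, Ne.symm has, this, has]

lemma count_delNth_other (s c : Bool) (hcs : c ≠ s) (w : Word) : ∀ i, 1 ≤ i → i ≤ w.count s →
    (delNth s i w).count c = w.count c := by
  induction w with
  | nil => intro i h1 h2; simp at h2; omega
  | cons a w ih =>
    intro i h1 h2
    rw [delNth_cons]
    by_cases has : a = s
    · subst has
      by_cases hi : i ≤ 1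
      · simp [hi, List.count_cons, Ne.symm hcs]
      · rw [if_pos rfl, if_neg hi]
        have hc : List.count a (a :: w) = w.count a + 1 := by simp [List.count_cons]
        have := ih (i-1) (by omega) (by omega)
        simp [List.count_cons, this]
    · rw [if_neg has]
      have hc : List.count s (a :: w) = w.count s := by simp [List.count_cons, Ne.symm has, has]
      have := ih i h1 (by omega)
      simp [List.count_cons, this]

lemma count_create_same (s : Bool) (w : Word) : ∀ i, (create s i w).count s = w.count s + 1 := by
  induction w with
  | nil =>
    intro i
    cases i <;> simp [create, List.count_cons]
  | cons a w ih =>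
    intro i
    cases i with
    | zero => simp [create, List.count_cons]
    | succ i =>
      rw [create_cons]
      by_cases has : a = s
      · subst has
        by_cases hi : i = 0
        · simp [hi, List.count_cons]
        · simp [hi, List.count_cons, ih i]
      · simp [has, List.count_cons, Ne.symm has, ih (i+1)]

lemma count_create_other (s c : Bool) (hcs : c ≠ s) (w : Word) : ∀ i,
    (create s i w).count c = w.count c := by
  induction w with
  | nil =>
    intro i
    cases i <;> simp [create, List.count_cons, Ne.symm hcs]
  | cons a w ih =>
    intro i
    cases i with
    | zero => simp [create, List.count_cons, Ne.symm hcs]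
    | succ i =>
      rw [create_cons]
      by_cases has : a = s
      · subst has
        by_cases hi : i = 0
        · simp [hi, List.count_cons, Ne.symm hcs]
        · simp [hi, List.count_cons, ih i]
      · simp [has, List.count_cons, ih (i+1)]

lemma create_of_gt (s : Bool) (w : Word) : ∀ i, w.count s < i → create s i w = w ++ [s] := by
  induction w with
  | nil => intro i h; cases i with
    | zero => simp at h
    | succ i => simp [create]
  | cons a w ih =>
    intro i h
    cases i with
    | zero => simp at h
    | succ i =>
      rw [create_cons]
      by_cases has : a = s
      · subst has
        have hc : List.count a (a :: w) = w.count a + 1 := by simp [List.count_cons]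
        have hi : ¬ i = 0 := by omega
        rw [if_pos rfl, if_neg hi, ih i (by omega)]
        simp
      · have hc : List.count s (a :: w) = w.count s := by simp [List.count_cons, Ne.symm has, has]
        rw [if_neg has, ih (i+1) (by omega)]
        simp

lemma occ_append_opp (b a : Bool) (hab : a ≠ b) (w : Word) : occ b (w ++ [a]) = occ b w := by
  unfold occ
  rw [List.length_append, List.length_singleton, List.range_succ, List.filter_append]
  have h1 : ∀ j ∈ List.range w.length,
      (decide ((w ++ [a]).getD j (!b) = b)) = decide (w.getD j (!b) = b) := by
    intro j hj
    rw [List.mem_range] at hj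
    rw [List.getD_eq_getElem _ _ (by simp; omega), List.getD_eq_getElem _ _ hj,
      List.getElem_append_left]
  have h2 : (w ++ [a]).getD w.length (!b) = a := by
    rw [List.getD_eq_getElem _ _ (by simp)]
    simp
  rw [List.filter_congr h1]
  simp [h2, hab]

lemma not_ne (s : Bool) : (!s) ≠ s := by cases s <;> simp

lemma occ_ne (s : Bool) (w : Word) (i j : ℕ) (hi : i < w.count s) (hj : j < w.count (!s)) :
    (occ s w).getD i 0 ≠ (occ (!s) w).getD j 0 := by
  intro he
  have h1 := occ_letter s w i hi
  have h2 := occ_letter (!s) w j hj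
  rw [Bool.not_not] at h2
  rw [he] at h1
  have hl := occ_lt_length (!s) w j hj
  rw [List.getD_eq_getElem _ _ hl] at h1 h2
  rw [h1] at h2
  exact absurd h2 (not_ne s).symm

lemma count_bang (s a : Bool) (w : Word) (has : a = s) :
    (a :: w).count (!s) = w.count (!s) := by
  subst has; simp [List.count_cons, not_ne]

lemma count_same (s : Bool) (w : Word) :
    (s :: w).count s = w.count s + 1 := by simp [List.count_cons]

lemma delOppPos (s : Bool) (w : Word) : ∀ i j, 1 ≤ i → i ≤ w.count s → j < w.count (!s) →
    (occ (!s) (delNth s i w)).getD j 0 =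
      if (occ (!s) w).getD j 0 < (occ s w).getD (i-1) 0
      then (occ (!s) w).getD j 0 else (occ (!s) w).getD j 0 - 1 := by
  induction w with
  | nil => intro i j h1 h2 h3; simp at h2; omega
  | cons a w ih =>
    intro i j h1 h2 h3
    by_cases has : a = s
    · subst has
      rw [count_bang a a w rfl] at h3
      have hoccs : occ a (a :: w) = 0 :: (occ a w).map (· + 1) := by
        rw [occ_cons]; simp
      have hoccn : occ (!a) (a :: w) = (occ (!a) w).map (· + 1) := by
        rw [occ_cons, if_neg (Ne.symm (not_ne a) : ¬ a = !a)]; simp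
      rw [delNth_cons, if_pos rfl]
      by_cases hi : i ≤ 1
      · -- i = 1
        have hi1 : i = 1 := by omega
        subst hi1
        rw [if_pos (by omega), hoccs, hoccn]
        rw [getD_map_succ _ _ (by rw [length_occ]; exact h3)]
        simp
      · rw [if_neg hi]
        have h2' : i - 1 ≤ w.count a := by rw [count_same] at h2; omega
        have hoccn' : occ (!a) (a :: delNth a (i-1) w) = (occ (!a) (delNth a (i-1) w)).map (· + 1) := by
          rw [occ_cons, if_neg (Ne.symm (not_ne a) : ¬ a = !a)]; simp
        rw [hoccn', getD_map_succ _ _ (by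
          rw [length_occ, count_delNth_other a (!a) (not_ne a) w (i-1) (by omega) h2']; exact h3)]
        rw [ih (i-1) j (by omega) h2' h3]
        rw [hoccs, hoccn]
        rw [getD_map_succ _ _ (by rw [length_occ]; exact h3)]
        have hgt : (0 : ℕ) :: (occ a w).map (· + 1) = ([0] ++ (occ a w).map (· + 1)) := rfl
        have hti : i - 1 = (i - 2) + 1 := by omega
        rw [hti, List.getD_cons_succ, getD_map_succ _ _ (by rw [length_occ]; omega)]
        have hne := occ_ne a w (i-1-1) j (by omega) h3
        have : i - 1 - 1 = i - 2 := by omega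
        rw [this] at hne
        simp only [Nat.add_sub_cancel]
        split_ifs with hlt <;> omega
    · -- a ≠ s, so a = !s
      have has' : a = !s := by cases a <;> cases s <;> simp_all
      rw [delNth_cons, if_neg has]
      have hoccs : occ s (a :: w) = (occ s w).map (· + 1) := by
        rw [occ_cons, if_neg has]; simp
      have hoccn : occ (!s) (a :: w) = 0 :: (occ (!s) w).map (· + 1) := by
        rw [occ_cons, if_pos has']; simp
      have hoccn' : occ (!s) (a :: delNth s i w) = 0 :: (occ (!s) (delNth s i w)).map (· + 1) := by
        rw [occ_cons, if_pos has']; simp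
      have h2' : i ≤ w.count s := by
        rw [List.count_cons, if_neg (by simp [has] : ¬ (a == s) = true)] at h2; omega
      have h3' : j < w.count (!s) + 1 := by
        rw [List.count_cons, if_pos (by simp [has'] : (a == !s) = true)] at h3; omega
      rw [hoccs, hoccn, hoccn']
      have htpos : (occ s (w : Word)).getD (i-1) 0 + 1 = ((occ s w).map (· + 1)).getD (i-1) 0 := by
        rw [getD_map_succ _ _ (by rw [length_occ]; omega)]
      cases j with
      | zero =>
        rw [List.getD_cons_zero, List.getD_cons_zero, ← htpos]
        rw [if_pos (by omega)]
      | succ j =>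
        have h3'' : j < w.count (!s) := by omega
        rw [List.getD_cons_succ, List.getD_cons_succ,
          getD_map_succ _ _ (by
            rw [length_occ, count_delNth_other s (!s) (not_ne s) w i h1 h2']; exact h3''),
          getD_map_succ _ _ (by rw [length_occ]; exact h3''), ← htpos]
        rw [ih i j h1 h2' h3'']
        have hne := occ_ne s w (i-1) j (by omega) h3''
        by_cases hlt : (occ (!s) w).getD j 0 < (occ s w).getD (i-1) 0
        · rw [if_pos hlt, if_pos (by omega)]
        · rw [if_neg hlt, if_neg (by omega)]
          omega

lemma creOppPos (s : Bool) (w : Word) : ∀ i j, 1 ≤ i → i ≤ w.count s → j < w.count (!s) →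
    (occ (!s) (create s i w)).getD j 0 =
      if (occ (!s) w).getD j 0 < (occ s w).getD (i-1) 0
      then (occ (!s) w).getD j 0 else (occ (!s) w).getD j 0 + 1 := by
  induction w with
  | nil => intro i j h1 h2 h3; simp at h2; omega
  | cons a w ih =>
    intro i j h1 h2 h3
    obtain ⟨k, rfl⟩ : ∃ k, i = k + 1 := ⟨i - 1, by omega⟩
    by_cases has : a = s
    · subst has
      rw [count_bang a a w rfl] at h3
      have hoccs : occ a (a :: w) = 0 :: (occ a w).map (· + 1) := by
        rw [occ_cons]; simp
      have hoccn : occ (!a) (a :: w) = (occ (!a) w).map (· + 1) := by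
        rw [occ_cons, if_neg (Ne.symm (not_ne a) : ¬ a = !a)]; simp
      rw [create_cons, if_pos rfl]
      by_cases hk : k = 0
      · subst hk
        rw [if_pos rfl]
        have h01 : occ (!a) (a :: a :: w) = (occ (!a) (a :: w)).map (· + 1) := by
          rw [occ_cons, if_neg (Ne.symm (not_ne a) : ¬ a = !a)]; simp
        rw [h01, getD_map_succ _ _ (by
            rw [length_occ, count_bang a a w rfl]; exact h3), hoccn,
          getD_map_succ _ _ (by rw [length_occ]; exact h3), hoccs]
        simp only [Nat.add_sub_cancel, List.getD_cons_zero]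
        rw [if_neg (by omega)]
      · rw [if_neg hk]
        have h2' : k ≤ w.count a := by rw [count_same] at h2; omega
        have hoccn' : occ (!a) (a :: create a k w) = (occ (!a) (create a k w)).map (· + 1) := by
          rw [occ_cons, if_neg (Ne.symm (not_ne a) : ¬ a = !a)]; simp
        rw [hoccn', getD_map_succ _ _ (by
          rw [length_occ, count_create_other a (!a) (not_ne a) w k]; exact h3)]
        rw [ih k j (by omega) h2' h3]
        rw [hoccs, hoccn, getD_map_succ _ _ (by rw [length_occ]; exact h3)]
        have hti : k + 1 - 1 = (k - 1) + 1 := by omega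
        rw [hti, List.getD_cons_succ, getD_map_succ _ _ (by rw [length_occ]; omega)]
        split_ifs with hlt <;> omega
    · have has' : a = !s := by cases a <;> cases s <;> simp_all
      rw [create_cons, if_neg has]
      have hoccs : occ s (a :: w) = (occ s w).map (· + 1) := by
        rw [occ_cons, if_neg has]; simp
      have hoccn : occ (!s) (a :: w) = 0 :: (occ (!s) w).map (· + 1) := by
        rw [occ_cons, if_pos has']; simp
      have hoccn' : occ (!s) (a :: create s (k+1) w) = 0 :: (occ (!s) (create s (k+1) w)).map (· + 1) := by
        rw [occ_cons, if_pos has']; simp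
      have h2' : k + 1 ≤ w.count s := by
        rw [List.count_cons, if_neg (by simp [has] : ¬ (a == s) = true)] at h2; omega
      rw [hoccs, hoccn, hoccn']
      have htpos : ((occ s w).map (· + 1)).getD (k+1-1) 0 = (occ s w).getD (k+1-1) 0 + 1 := by
        rw [getD_map_succ _ _ (by rw [length_occ]; omega)]
      cases j with
      | zero =>
        rw [List.getD_cons_zero, List.getD_cons_zero, htpos, if_pos (by omega)]
      | succ j =>
        have h3'' : j < w.count (!s) := by
          rw [List.count_cons, if_pos (by simp [has'] : (a == !s) = true)] at h3; omega
        rw [List.getD_cons_succ, List.getD_cons_succ,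
          getD_map_succ _ _ (by
            rw [length_occ, count_create_other s (!s) (not_ne s) w (k+1)]; exact h3''),
          getD_map_succ _ _ (by rw [length_occ]; exact h3''), htpos]
        rw [ih (k+1) j (by omega) h2' h3'']
        split_ifs with hlt <;> omega

lemma count_add_count' (b : Bool) (w : Word) : w.count b + w.count (!b) = w.length := by
  cases b
  · simpa using count_add_count w
  · have := count_add_count w; simp only [Bool.not_true]; omega

lemma count_take_opp (s : Bool) (w : Word) (j : ℕ) (hj : j < w.count (!s)) :
    (w.take ((occ (!s) w).getD j 0)).count s = (occ (!s) w).getD j 0 - j := by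
  have h1 := count_take_occ (!s) w j hj
  have hr := occ_lt_length (!s) w j hj
  have hlen : (w.take ((occ (!s) w).getD j 0)).length = (occ (!s) w).getD j 0 := by
    rw [List.length_take]; omega
  have h2 := count_add_count' s (w.take ((occ (!s) w).getD j 0))
  rw [hlen, h1] at h2
  omega

lemma delOpp_take (s : Bool) (u : Word) (i j : ℕ) (h1 : 1 ≤ i) (h2 : i ≤ u.count s)
    (hj : j < u.count (!s)) :
    (occ (!s) (delNth s i u)).getD j 0 =
      if i ≤ (occ (!s) u).getD j 0 - j then (occ (!s) u).getD j 0 - 1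
      else (occ (!s) u).getD j 0 := by
  rw [delOppPos s u i j h1 h2 hj]
  have hK : ((occ s u).getD (i-1) 0 < (occ (!s) u).getD j 0) ↔
      i ≤ (occ (!s) u).getD j 0 - j := by
    rw [occ_lt_iff s u (i-1) _ (by omega), count_take_opp s u j hj]
    omega
  have hne := occ_ne s u (i-1) j (by omega) hj
  by_cases hc : i ≤ (occ (!s) u).getD j 0 - j
  · rw [if_pos hc, if_neg (by have := hK.mpr hc; omega)]
  · have h3 : ¬ ((occ s u).getD (i-1) 0 < (occ (!s) u).getD j 0) := fun hh => hc (hK.mp hh)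
    rw [if_neg hc, if_pos (by omega)]

lemma creOpp_take (s : Bool) (v : Word) (i j : ℕ) (h1 : 1 ≤ i) (hj : j < v.count (!s)) :
    (occ (!s) (create s i v)).getD j 0 =
      if i ≤ (occ (!s) v).getD j 0 - j then (occ (!s) v).getD j 0 + 1
      else (occ (!s) v).getD j 0 := by
  by_cases h2 : i ≤ v.count s
  · rw [creOppPos s v i j h1 h2 hj]
    have hK : ((occ s v).getD (i-1) 0 < (occ (!s) v).getD j 0) ↔
        i ≤ (occ (!s) v).getD j 0 - j := by
      rw [occ_lt_iff s v (i-1) _ (by omega), count_take_opp s v j hj]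
      omega
    have hne := occ_ne s v (i-1) j (by omega) hj
    by_cases hc : i ≤ (occ (!s) v).getD j 0 - j
    · rw [if_pos hc, if_neg (by have := hK.mpr hc; omega)]
    · have h3 : ¬ ((occ s v).getD (i-1) 0 < (occ (!s) v).getD j 0) := fun hh => hc (hK.mp hh)
      rw [if_neg hc, if_pos (by omega)]
  · rw [create_of_gt s v i (by omega), occ_append_opp (!s) s (Ne.symm (not_ne s)) v]
    have h3 : (occ (!s) v).getD j 0 - j ≤ v.count s := by
      rw [← count_take_opp s v j hj]
      exact List.Sublist.count_le s (List.take_sublist _ _)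
    rw [if_neg (by omega)]

lemma trick (p0 p1 j i : ℕ) (h1 : 1 ≤ i) :
    (p0 ≤ (if i ≤ p1 - j then p1 - 1 else p1)) ↔
    ((if i ≤ p0 - j then p0 + 1 else p0) ≤ p1) := by
  split_ifs <;> omega

lemma core (s : Bool) (u v : Word) (i : ℕ) (h1 : 1 ≤ i) (h2 : i ≤ u.count s)
    (hco : u.count (!s) = v.count (!s)) :
    (∀ j < v.count (!s), (occ (!s) v).getD j 0 ≤ (occ (!s) (delNth s i u)).getD j 0) ↔
    (∀ j < v.count (!s), (occ (!s) (create s i v)).getD j 0 ≤ (occ (!s) u).getD j 0) := by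
  refine forall_congr' (fun j => imp_congr_right (fun hj => ?_))
  rw [delOpp_take s u i j h1 h2 (by omega), creOpp_take s v i j h1 hj]
  exact trick _ _ j i h1

lemma dom (b : Bool) (u v : Word) (hc : u.count b = v.count b) :
    (∀ j < u.count b, (occ b u).getD j 0 ≤ (occ b v).getD j 0) ↔
    (∀ c, (v.take c).count b ≤ (u.take c).count b) := by
  constructor
  · intro h c
    by_contra hlt
    push_neg at hlt
    set k := (u.take c).count b with hk
    have hk1 : k < v.count b :=
      lt_of_lt_of_le hlt (List.Sublist.count_le b (List.take_sublist _ _))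
    have hv : (occ b v).getD k 0 < c := (occ_lt_iff b v k c hk1).mpr hlt
    have hk0 : k < u.count b := by omega
    have h3 := h k hk0
    have h4 := (occ_lt_iff b u k c hk0).mp (by omega)
    omega
  · intro h j hj
    have hj' : j < v.count b := by omega
    have h1 : j < (v.take ((occ b v).getD j 0 + 1)).count b :=
      (occ_lt_iff b v j _ hj').mp (by omega)
    have h2 := h ((occ b v).getD j 0 + 1)
    have h4 := (occ_lt_iff b u j ((occ b v).getD j 0 + 1) hj).mpr (by omega)
    omega

lemma duality (u v : Word) (hf : u.count false = v.count false)
    (ht : u.count true = v.count true) :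
    (∀ j < u.count false, (occ false u).getD j 0 ≤ (occ false v).getD j 0) ↔
    (∀ j < v.count true, (occ true v).getD j 0 ≤ (occ true u).getD j 0) := by
  rw [dom false u v hf, dom true v u ht.symm]
  refine forall_congr' (fun c => ?_)
  have h1 := count_add_count (u.take c)
  have h2 := count_add_count (v.take c)
  have hlu : (u.take c).length = min c u.length := List.length_take
  have hlv : (v.take c).length = min c v.length := List.length_take
  have hl : u.length = v.length := by
    have := count_add_count u; have := count_add_count v; omega
  rw [hl] at hlu
  constructor <;> intro h <;> omega

lemma occ_false (w : Word) : occ false w = xIdx w := rfl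

lemma occ_true (w : Word) : occ true w = yIdx w := rfl

lemma wle_iff (w0 w1 : Word) : wle w0 w1 ↔
    (w0.count false = w1.count false ∧ w0.count true = w1.count true ∧
    ∀ i < w0.count false, (occ false w0).getD i 0 ≤ (occ false w1).getD i 0) := Iff.rfl

lemma mainX (w0 w1 : Word) (i : ℕ) (h1 : 1 ≤ i) (h2 : i ≤ w0.count false) :
    wle (delNth false i w0) w1 ↔ wle w0 (create false i w1) := by
  have hDf := count_delNth_same false w0 i h1 h2
  have hDt := count_delNth_other false true (by simp) w0 i h1 h2
  have hCf := count_create_same false w1 i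
  have hCt := count_create_other false true (by simp) w1 i
  by_cases hcf : w0.count false = w1.count false + 1 ∧ w0.count true = w1.count true
  · obtain ⟨hc1, hc2⟩ := hcf
    have hd1 : (delNth false i w0).count false = w1.count false := by omega
    have hd2 : (delNth false i w0).count true = w1.count true := by omega
    have he1 : w0.count false = (create false i w1).count false := by omega
    have he2 : w0.count true = (create false i w1).count true := by omega
    have hpos : (∀ j < (delNth false i w0).count false,
        (occ false (delNth false i w0)).getD j 0 ≤ (occ false w1).getD j 0) ↔
        (∀ j < w0.count false, (occ false w0).getD j 0 ≤ (occ false (create false i w1)).getD j 0) := by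
      rw [duality (delNth false i w0) w1 hd1 hd2, duality w0 (create false i w1) he1 he2]
      have hcore := core false w0 w1 i h1 h2 (by simpa using hc2)
      simp only [Bool.not_false] at hcore
      rw [hCt]
      exact hcore
    rw [wle_iff, wle_iff]
    constructor
    · rintro ⟨x, y, z⟩
      exact ⟨he1, he2, hpos.mp z⟩
    · rintro ⟨x, y, z⟩
      exact ⟨hd1, hd2, hpos.mpr z⟩
  · apply iff_of_false
    · rintro ⟨d1, d2, -⟩
      rw [hDf] at d1; rw [hDt] at d2
      exact hcf ⟨by omega, d2⟩
    · rintro ⟨d1, d2, -⟩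
      rw [hCf] at d1; rw [hCt] at d2
      exact hcf ⟨by omega, d2⟩

lemma mainY (w0 w1 : Word) (i : ℕ) (h1 : 1 ≤ i) (h2 : i ≤ w1.count true) :
    wle w0 (delNth true i w1) ↔ wle (create true i w0) w1 := by
  have hDf := count_delNth_other true false (by simp) w1 i h1 h2
  have hDt := count_delNth_same true w1 i h1 h2
  have hCf := count_create_other true false (by simp) w0 i
  have hCt := count_create_same true w0 i
  by_cases hcf : w0.count false = w1.count false ∧ w0.count true + 1 = w1.count true
  · obtain ⟨hc1, hc2⟩ := hcf
    have hd1 : w0.count false = (delNth true i w1).count false := by omega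
    have hd2 : w0.count true = (delNth true i w1).count true := by omega
    have he1 : (create true i w0).count false = w1.count false := by omega
    have he2 : (create true i w0).count true = w1.count true := by omega
    have hpos : (∀ j < w0.count false,
        (occ false w0).getD j 0 ≤ (occ false (delNth true i w1)).getD j 0) ↔
        (∀ j < (create true i w0).count false,
        (occ false (create true i w0)).getD j 0 ≤ (occ false w1).getD j 0) := by
      have hcore := core true w1 w0 i h1 h2 (by simpa using hc1.symm)
      simp only [Bool.not_true] at hcore
      rw [hCf]
      exact hcore
    rw [wle_iff, wle_iff]
    constructor
    · rintro ⟨x, y, z⟩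
      exact ⟨he1, he2, hpos.mp z⟩
    · rintro ⟨x, y, z⟩
      exact ⟨hd1, hd2, hpos.mpr z⟩
  · apply iff_of_false
    · rintro ⟨d1, d2, -⟩
      rw [hDf] at d1; rw [hDt] at d2
      exact hcf ⟨d1, by omega⟩
    · rintro ⟨d1, d2, -⟩
      rw [hCf] at d1; rw [hCt] at d2
      exact hcf ⟨d1, by omega⟩

lemma wle_cons (a : Bool) (u v : Word) : wle (a :: u) (a :: v) ↔ wle u v := by
  have hu0 : occ false (false :: u) = 0 :: (occ false u).map (· + 1) := by
    rw [occ_cons]; simp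
  have hu1 : occ false (true :: u) = (occ false u).map (· + 1) := by
    rw [occ_cons]; simp
  have hv0 : occ false (false :: v) = 0 :: (occ false v).map (· + 1) := by
    rw [occ_cons]; simp
  have hv1 : occ false (true :: v) = (occ false v).map (· + 1) := by
    rw [occ_cons]; simp
  constructor
  · rintro ⟨h1, h2, h3⟩
    have hf : u.count false = v.count false := by
      cases a <;> simp [List.count_cons] at h1 <;> omega
    have ht : u.count true = v.count true := by
      cases a <;> simp [List.count_cons] at h2 <;> omega
    refine ⟨hf, ht, ?_⟩
    intro j hj
    rw [← occ_false, ← occ_false]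
    rw [show xIdx (a :: u) = occ false (a :: u) from rfl,
      show xIdx (a :: v) = occ false (a :: v) from rfl] at h3
    cases a
    · have := h3 (j+1) (by simp [List.count_cons]; omega)
      rw [hu0, hv0, List.getD_cons_succ, List.getD_cons_succ,
        getD_map_succ _ _ (by rw [length_occ]; exact hj),
        getD_map_succ _ _ (by rw [length_occ]; omega)] at this
      omega
    · have := h3 j (by simp [List.count_cons]; omega)
      rw [hu1, hv1, getD_map_succ _ _ (by rw [length_occ]; exact hj),
        getD_map_succ _ _ (by rw [length_occ]; omega)] at this
      omega
  · rintro ⟨h1, h2, h3⟩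
    have hf : (a :: u).count false = (a :: v).count false := by
      cases a <;> simp [List.count_cons] <;> omega
    have ht : (a :: u).count true = (a :: v).count true := by
      cases a <;> simp [List.count_cons] <;> omega
    refine ⟨hf, ht, ?_⟩
    intro j hj
    rw [show xIdx (a :: u) = occ false (a :: u) from rfl,
      show xIdx (a :: v) = occ false (a :: v) from rfl]
    rw [show xIdx u = occ false u from rfl, show xIdx v = occ false v from rfl] at h3
    cases a
    · rw [hu0, hv0]
      have hju : j < u.count false + 1 := by
        simp [List.count_cons] at hj; omega
      cases j with
      | zero => simp
      | succ j =>
        rw [List.getD_cons_succ, List.getD_cons_succ,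
          getD_map_succ _ _ (by rw [length_occ]; omega),
          getD_map_succ _ _ (by rw [length_occ]; omega)]
        have := h3 j (by omega)
        omega
    · rw [hu1, hv1]
      have hju : j < u.count false := by
        simp [List.count_cons] at hj; omega
      rw [getD_map_succ _ _ (by rw [length_occ]; omega),
        getD_map_succ _ _ (by rw [length_occ]; omega)]
      have := h3 j (by omega)
      omega

lemma wle_true_false (u v : Word) : ¬ wle (true :: u) (false :: v) := by
  rintro ⟨h1, h2, h3⟩
  have hcu : (true :: u).count false = u.count false := by simp [List.count_cons]
  have hcv : (false :: v).count false = v.count false + 1 := by simp [List.count_cons]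
  have hpos : 0 < u.count false := by omega
  have := h3 0 (by omega)
  have hu : occ false (true :: u) = (occ false u).map (· + 1) := by
    rw [occ_cons]; simp
  have hv : occ false (false :: v) = 0 :: (occ false v).map (· + 1) := by
    rw [occ_cons]; simp
  rw [← occ_false, ← occ_false, hu, hv, List.getD_cons_zero,
    getD_map_succ _ _ (by rw [length_occ]; exact hpos)] at this
  omega

lemma create_zero (s : Bool) (w : Word) : create s 0 w = s :: w := by
  cases w <;> rfl


/-- Partial adjointness of creation and annihilation:
`⟨a_{x,i} w0 | w1⟩ = ⟨w0 | a*_{x,i} w1⟩` for `0 ≤ i ≤ n_x(w0)`, and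
`⟨w0 | a_{y,i} w1⟩ = ⟨a*_{y,i} w0 | w1⟩` for `0 ≤ i ≤ n_y(w1)`;
a failed terminal annihilation contributes `0`. -/
theorem stmt8 (w0 w1 : Word) :
    (∀ i ≤ w0.count false,
      (annih false i w0).elim 0 (fun u => pairW u w1)
        = pairW w0 (create false i w1)) ∧
    (∀ i ≤ w1.count true,
      (annih true i w1).elim 0 (fun u => pairW w0 u)
        = pairW (create true i w0) w1) := by
  constructor
  · intro i hi
    rcases Nat.eq_zero_or_pos i with rfl | hpos
    · cases w0 with
      | nil =>
        show (0:ℤ) = pairW [] (create false 0 w1)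
        simp only [pairW]
        rw [if_neg]
        rintro ⟨h1, -, -⟩
        simp [create, List.count_cons] at h1
      | cons a t =>
        cases a
        · show pairW t w1 = pairW (false :: t) (create false 0 w1)
          rw [create_zero]
          simp only [pairW]
          exact if_congr (wle_cons false t w1).symm rfl rfl
        · show (0:ℤ) = pairW (true :: t) (create false 0 w1)
          rw [create_zero]
          simp only [pairW]
          rw [if_neg (wle_true_false t w1)]
    · have hann : annih false i w0 = some (delNth false i w0) := by
        unfold annih
        rw [if_neg (by omega), if_pos hi]
      rw [hann]
      show pairW (delNth false i w0) w1 = pairW w0 (create false i w1)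
      simp only [pairW]
      exact if_congr (mainX w0 w1 i hpos hi) rfl rfl
  · intro i hi
    rcases Nat.eq_zero_or_pos i with rfl | hpos
    · cases w1 with
      | nil =>
        show (0:ℤ) = pairW (create true 0 w0) []
        simp only [pairW]
        rw [if_neg]
        rintro ⟨-, h2, -⟩
        simp [create, List.count_cons] at h2
      | cons a t =>
        cases a
        · show (0:ℤ) = pairW (create true 0 w0) (false :: t)
          rw [create_zero]
          simp only [pairW]
          rw [if_neg (wle_true_false w0 t)]
        · show pairW w0 t = pairW (create true 0 w0) (true :: t)
          rw [create_zero]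
          simp only [pairW]
          exact if_congr (wle_cons true w0 t).symm rfl rfl
    · have hann : annih true i w1 = some (delNth true i w1) := by
        unfold annih
        rw [if_neg (by omega), if_pos hi]
      rw [hann]
      show pairW w0 (delNth true i w1) = pairW (create true i w0) w1
      simp only [pairW]
      exact if_congr (mainY w0 w1 i hpos hi) rfl rfl
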